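/- Every Cameron--Walker graph is vertex decomposable; in particular its independence complex is shellable and sequentially Cohen--Macaulay. -/

import Mathlib

open scoped Classical

/-- Vertex type of a Cameron--Walker graph: the bipartition classes `Fin n` and `Fin m`
of the supporting bipartite graph, the leaves (the `l`-th leaf attached to the `i`-th
vertex of `X` is `⟨i, l⟩`), and the pairs of degree-2 vertices of the pendant triangles
(the `l`-th triangle attached to the `j`-th vertex of `Y` has vertices `⟨j, l, true⟩`
and `⟨j, l, false⟩`). -/
abbrev CWVert (n m : ℕ) (f : Fin n → ℕ) (t : Fin m → ℕ) : Type :=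
  (Fin n ⊕ Fin m) ⊕ ((Σ i : Fin n, Fin (f i)) ⊕ (Σ j : Fin m, Fin (t j) × Bool))

/-- The Cameron--Walker graph determined by a bipartite adjacency relation
`R : Fin n → Fin m → Prop` between the parts `X = Fin n` and `Y = Fin m`,
with `f i` leaves attached to the `i`-th vertex of `X` and `t j` pendant triangles
attached to the `j`-th vertex of `Y`. -/
def cwGraph (n m : ℕ) (f : Fin n → ℕ) (t : Fin m → ℕ) (R : Fin n → Fin m → Prop) :
    SimpleGraph (CWVert n m f t) :=
  SimpleGraph.fromRel (fun a b =>
    (∃ i j, a = Sum.inl (Sum.inl i) ∧ b = Sum.inl (Sum.inr j) ∧ R i j) ∨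
    (∃ (i : Fin n) (l : Fin (f i)), a = Sum.inl (Sum.inl i) ∧ b = Sum.inr (Sum.inl ⟨i, l⟩)) ∨
    (∃ (j : Fin m) (p : Fin (t j) × Bool),
      a = Sum.inl (Sum.inr j) ∧ b = Sum.inr (Sum.inr ⟨j, p⟩)) ∨
    (∃ (j : Fin m) (l : Fin (t j)),
      a = Sum.inr (Sum.inr ⟨j, (l, true)⟩) ∧ b = Sum.inr (Sum.inr ⟨j, (l, false)⟩)))

/-- The closed neighbourhood `N[v]` of a vertex, as a finset. -/
noncomputable def closedNbhd {V : Type*} [Fintype V] (G : SimpleGraph V) (v : V) :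
    Finset V :=
  Finset.univ.filter (fun w => w = v ∨ G.Adj v w)

/-- An independent set of the induced subgraph of `G` on the finset `S`,
i.e. a face of the independence complex of `G ∖ (V ∖ S)`. -/
def IsIndepIn {V : Type*} (G : SimpleGraph V) (S A : Finset V) : Prop :=
  A ⊆ S ∧ ∀ u ∈ A, ∀ v ∈ A, ¬ G.Adj u v

/-- A maximal independent set (facet of the independence complex) of the induced
subgraph of `G` on `S`. -/
def IsMaxIndepIn {V : Type*} (G : SimpleGraph V) (S A : Finset V) : Prop :=
  IsIndepIn G S A ∧ ∀ B : Finset V, IsIndepIn G S B → A ⊆ B → B = A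

/-- Vertex decomposability of (the independence complex of) the induced subgraph of `G`
on the vertex set `S`: either there are no edges (the independence complex is a simplex),
or some vertex `v ∈ S` is a shedding vertex: `G ∖ v` and `G ∖ N[v]` are vertex
decomposable, and no independent set of `G ∖ N[v]` is a maximal independent set of
`G ∖ v`. -/
noncomputable def VDOn {V : Type*} [Fintype V] [DecidableEq V] (G : SimpleGraph V) :
    Finset V → Prop := fun S =>
  (∀ u ∈ S, ∀ v ∈ S, ¬ G.Adj u v) ∨
  ∃ v, ∃ _h : v ∈ S,
    VDOn G (S.erase v) ∧
    VDOn G (S \ closedNbhd G v) ∧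
    ∀ A : Finset V, IsIndepIn G (S \ closedNbhd G v) A →
      ¬ IsMaxIndepIn G (S.erase v) A
termination_by S => S.card
decreasing_by
  · exact Finset.card_lt_card (Finset.erase_ssubset _h)
  · refine Finset.card_lt_card
      ((Finset.ssubset_iff_of_subset Finset.sdiff_subset).mpr ⟨v, _h, ?_⟩)
    simp [closedNbhd]


-- shed lemma
theorem shed {V : Type*} [Fintype V] [DecidableEq V] (G : SimpleGraph V) (S : Finset V)
    (u v : V) (hv : v ∈ S) (hvu : G.Adj u v)
    (hnb : ∀ w ∈ S, G.Adj v w → w ∈ closedNbhd G u) :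
    ∀ A : Finset V, IsIndepIn G (S \ closedNbhd G u) A →
      ¬ IsMaxIndepIn G (S.erase u) A := by
  intro A ⟨hAS, hAind⟩ ⟨_, hmax⟩
  have hvN : v ∈ closedNbhd G u := by simp [closedNbhd, hvu]
  have hvA : v ∉ A := fun h => (Finset.mem_sdiff.mp (hAS h)).2 hvN
  have hB : IsIndepIn G (S.erase u) (insert v A) := by
    constructor
    · intro x hx
      rcases Finset.mem_insert.mp hx with rfl | hx
      · exact Finset.mem_erase.mpr ⟨hvu.ne', hv⟩
      · have := Finset.mem_sdiff.mp (hAS hx)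
        refine Finset.mem_erase.mpr ⟨?_, this.1⟩
        rintro rfl
        exact this.2 (by simp [closedNbhd])
    · have hvA' : ∀ y ∈ A, ¬ G.Adj v y := fun y hy hadj =>
        (Finset.mem_sdiff.mp (hAS hy)).2
          (hnb y (Finset.mem_sdiff.mp (hAS hy)).1 hadj)
      intro x hx y hy hadj
      rcases Finset.mem_insert.mp hx with hx | hx <;>
        rcases Finset.mem_insert.mp hy with hy | hy
      · rw [hx, hy] at hadj; exact G.loopless.irrefl v hadj
      · rw [hx] at hadj; exact hvA' y hy hadj
      · rw [hy] at hadj; exact hvA' x hx hadj.symm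
      · exact hAind x hx y hy hadj
  have := hmax _ hB (Finset.subset_insert _ _)
  exact hvA (this ▸ Finset.mem_insert_self v A)

section CW
variable {n m : ℕ} {f : Fin n → ℕ} {t : Fin m → ℕ} {R : Fin n → Fin m → Prop}

def vX (n m) (f : Fin n → ℕ) (t : Fin m → ℕ) (i : Fin n) : CWVert n m f t := Sum.inl (Sum.inl i)
def vY (n m) (f : Fin n → ℕ) (t : Fin m → ℕ) (j : Fin m) : CWVert n m f t := Sum.inl (Sum.inr j)
def vL (n m) (f : Fin n → ℕ) (t : Fin m → ℕ) (i : Fin n) (l : Fin (f i)) : CWVert n m f t :=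
  Sum.inr (Sum.inl ⟨i, l⟩)
def vT (n m) (f : Fin n → ℕ) (t : Fin m → ℕ) (j : Fin m) (p : Fin (t j) × Bool) : CWVert n m f t :=
  Sum.inr (Sum.inr ⟨j, p⟩)

lemma adj_vL {i : Fin n} {l : Fin (f i)} {w : CWVert n m f t}
    (h : (cwGraph n m f t R).Adj (vL n m f t i l) w) : w = vX n m f t i := by
  rw [cwGraph, SimpleGraph.fromRel_adj] at h
  obtain ⟨hne, h | h⟩ := h <;>
    simp only [vL, vX, vY, vT] at * <;>
    rcases h with ⟨i', j', h1, h2, _⟩ | ⟨i', l', h1, h2⟩ | ⟨j', p', h1, h2⟩ | ⟨j', l', h1, h2⟩ <;>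
    simp_all

lemma adj_vT {j : Fin m} {l : Fin (t j)} {b : Bool} {w : CWVert n m f t}
    (h : (cwGraph n m f t R).Adj (vT n m f t j (l, b)) w) :
    w = vY n m f t j ∨ w = vT n m f t j (l, !b) := by
  rw [cwGraph, SimpleGraph.fromRel_adj] at h
  obtain ⟨hne, h | h⟩ := h <;>
    simp only [vL, vX, vY, vT] at * <;>
    rcases h with ⟨i', j', h1, h2, _⟩ | ⟨i', l', h1, h2⟩ | ⟨j', p', h1, h2⟩ | ⟨j', l', h1, h2⟩
  · simp_all
  · simp_all
  · simp_all
  · -- a = vT j (l,b) = vT j' (l', true), w = vT j' (l', false)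
    simp only [Sum.inr.injEq, Sigma.mk.inj_iff] at h1
    obtain ⟨rfl, hh⟩ := h1
    rw [heq_iff_eq, Prod.ext_iff] at hh
    obtain ⟨h3, h4⟩ := hh
    simp only [] at h3 h4
    subst h4
    simp_all
  · simp_all
  · simp_all
  · -- w = vY j', a = vT j' p'
    simp only [Sum.inr.injEq, Sigma.mk.inj_iff] at h2
    obtain ⟨rfl, hh⟩ := h2
    rw [heq_iff_eq] at hh
    simp_all
  · -- w = vT j' (l',true), a = vT j' (l', false)
    simp only [Sum.inr.injEq, Sigma.mk.inj_iff] at h2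
    obtain ⟨rfl, hh⟩ := h2
    rw [heq_iff_eq, Prod.ext_iff] at hh
    obtain ⟨h3, h4⟩ := hh
    simp only [] at h3 h4
    subst h4
    simp_all

lemma adj_XL {i : Fin n} (l : Fin (f i)) :
    (cwGraph n m f t R).Adj (vX n m f t i) (vL n m f t i l) := by
  rw [cwGraph, SimpleGraph.fromRel_adj]
  exact ⟨by simp [vX, vL], Or.inl (Or.inr (Or.inl ⟨i, l, rfl, rfl⟩))⟩

lemma adj_YT {j : Fin m} (p : Fin (t j) × Bool) :
    (cwGraph n m f t R).Adj (vY n m f t j) (vT n m f t j p) := by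
  rw [cwGraph, SimpleGraph.fromRel_adj]
  exact ⟨by simp [vY, vT], Or.inl (Or.inr (Or.inr (Or.inl ⟨j, p, rfl, rfl⟩)))⟩

lemma adj_TT {j : Fin m} (l : Fin (t j)) :
    (cwGraph n m f t R).Adj (vT n m f t j (l, true)) (vT n m f t j (l, false)) := by
  rw [cwGraph, SimpleGraph.fromRel_adj]
  refine ⟨by simp [vT], Or.inl (Or.inr (Or.inr (Or.inr ⟨j, l, rfl, rfl⟩)))⟩

def CWP (S : Finset (CWVert n m f t)) : Prop :=
  ∀ i : Fin n, vX n m f t i ∈ S → ∃ l : Fin (f i), vL n m f t i l ∈ S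

lemma mem_closedNbhd {V : Type*} [Fintype V] (G : SimpleGraph V) {v w : V} :
    w ∈ closedNbhd G v ↔ w = v ∨ G.Adj v w := by
  simp [closedNbhd]

lemma CWP_erase {S : Finset (CWVert n m f t)} (hP : CWP S) (w : CWVert n m f t)
    (hwL : ∀ (i : Fin n) (l : Fin (f i)), w ≠ vL n m f t i l) :
    CWP (S.erase w) := by
  intro i hi
  obtain ⟨l, hl⟩ := hP i (Finset.mem_of_mem_erase hi)
  exact ⟨l, Finset.mem_erase.mpr ⟨fun h => hwL i l h.symm, hl⟩⟩

lemma CWP_sdiff {S : Finset (CWVert n m f t)} (hP : CWP S) (w : CWVert n m f t)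
    (hwL : ∀ (i : Fin n) (l : Fin (f i)), w ≠ vL n m f t i l) :
    CWP (S \ closedNbhd (cwGraph n m f t R) w) := by
  intro i hi
  obtain ⟨hiS, hiN⟩ := Finset.mem_sdiff.mp hi
  obtain ⟨l, hl⟩ := hP i hiS
  refine ⟨l, Finset.mem_sdiff.mpr ⟨hl, ?_⟩⟩
  intro hN
  rcases mem_closedNbhd _ |>.mp hN with h | h
  · exact hwL i l h.symm
  · have := adj_vL (R := R) h.symm
    subst this
    exact hiN (mem_closedNbhd _ |>.mpr (Or.inl rfl))

lemma shedAt {S : Finset (CWVert n m f t)}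
    (IH : ∀ T ⊂ S, CWP T → VDOn (cwGraph n m f t R) T) (hP : CWP S)
    (w v' : CWVert n m f t) (hw : w ∈ S)
    (hwL : ∀ (i : Fin n) (l : Fin (f i)), w ≠ vL n m f t i l)
    (hv' : v' ∈ S) (hadj : (cwGraph n m f t R).Adj w v')
    (hnb : ∀ x ∈ S, (cwGraph n m f t R).Adj v' x → x ∈ closedNbhd (cwGraph n m f t R) w) :
    ∃ v, ∃ _h : v ∈ S,
      VDOn (cwGraph n m f t R) (S.erase v) ∧
      VDOn (cwGraph n m f t R) (S \ closedNbhd (cwGraph n m f t R) v) ∧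
      ∀ A : Finset (CWVert n m f t),
        IsIndepIn (cwGraph n m f t R) (S \ closedNbhd (cwGraph n m f t R) v) A →
          ¬ IsMaxIndepIn (cwGraph n m f t R) (S.erase v) A := by
  refine ⟨w, hw, ?_, ?_, shed _ S w v' hv' hadj hnb⟩
  · exact IH _ (Finset.erase_ssubset hw) (CWP_erase hP w hwL)
  · refine IH _ ((Finset.ssubset_iff_of_subset Finset.sdiff_subset).mpr
      ⟨w, hw, ?_⟩) (CWP_sdiff hP w hwL)
    simp [closedNbhd]

lemma handle {S : Finset (CWVert n m f t)}
    (IH : ∀ T ⊂ S, CWP T → VDOn (cwGraph n m f t R) T) (hP : CWP S)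
    {u v : CWVert n m f t} (hu : u ∈ S) (hv : v ∈ S)
    (hrel :
      (∃ i j, u = Sum.inl (Sum.inl i) ∧ v = Sum.inl (Sum.inr j) ∧ R i j) ∨
      (∃ (i : Fin n) (l : Fin (f i)), u = Sum.inl (Sum.inl i) ∧ v = Sum.inr (Sum.inl ⟨i, l⟩)) ∨
      (∃ (j : Fin m) (p : Fin (t j) × Bool),
        u = Sum.inl (Sum.inr j) ∧ v = Sum.inr (Sum.inr ⟨j, p⟩)) ∨
      (∃ (j : Fin m) (l : Fin (t j)),
        u = Sum.inr (Sum.inr ⟨j, (l, true)⟩) ∧ v = Sum.inr (Sum.inr ⟨j, (l, false)⟩))) :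
    ∃ w, ∃ _h : w ∈ S,
      VDOn (cwGraph n m f t R) (S.erase w) ∧
      VDOn (cwGraph n m f t R) (S \ closedNbhd (cwGraph n m f t R) w) ∧
      ∀ A : Finset (CWVert n m f t),
        IsIndepIn (cwGraph n m f t R) (S \ closedNbhd (cwGraph n m f t R) w) A →
          ¬ IsMaxIndepIn (cwGraph n m f t R) (S.erase w) A := by
  rcases hrel with ⟨i, j, rfl, rfl, hR⟩ | ⟨i, l, rfl, rfl⟩ | ⟨j, p, rfl, rfl⟩ |
    ⟨j, l, rfl, rfl⟩
  · -- X -- Y edge: shed vX i using a leaf from CWP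
    obtain ⟨l, hl⟩ := hP i hu
    refine shedAt IH hP (vX n m f t i) (vL n m f t i l) hu (by simp [vX, vL]) hl
      (adj_XL l) ?_
    intro x hx hadj
    rw [adj_vL (R := R) hadj]
    exact (mem_closedNbhd _).mpr (Or.inl rfl)
  · -- X -- leaf edge
    obtain ⟨l', hl'⟩ := hP i hu
    refine shedAt IH hP (vX n m f t i) (vL n m f t i l') hu (by simp [vX, vL]) hl'
      (adj_XL l') ?_
    intro x hx hadj
    rw [adj_vL (R := R) hadj]
    exact (mem_closedNbhd _).mpr (Or.inl rfl)
  · -- Y -- triangle edge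
    obtain ⟨l, b⟩ := p
    by_cases hq : vT n m f t j (l, !b) ∈ S
    · -- both triangle vertices present: shed v = vT j (l, b)
      refine shedAt IH hP (vT n m f t j (l, b)) (vT n m f t j (l, !b)) hv
        (by simp [vT, vL]) hq ?_ ?_
      · cases b
        · exact (adj_TT (R := R) l).symm
        · exact adj_TT (R := R) l
      · intro x hx hadj
        rcases adj_vT (R := R) hadj with h | h
        · subst h
          exact (mem_closedNbhd _).mpr (Or.inr (adj_YT (l, b)).symm)
        · subst h
          refine (mem_closedNbhd _).mpr (Or.inl ?_)
          simp [vT]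
    · -- partner absent: triangle vertex is a leaf at vY j: shed vY j
      refine shedAt IH hP (vY n m f t j) (vT n m f t j (l, b)) hu
        (by simp [vY, vL]) hv (adj_YT (l, b)) ?_
      intro x hx hadj
      rcases adj_vT (R := R) hadj with h | h
      · subst h
        exact (mem_closedNbhd _).mpr (Or.inl rfl)
      · subst h
        exact absurd hx hq
  · -- triangle pair edge: shed vT j (l, true)
    refine shedAt IH hP (vT n m f t j (l, true)) (vT n m f t j (l, false)) hu
      (by simp [vT, vL]) hv (adj_TT l) ?_
    intro x hx hadj
    rcases adj_vT (R := R) hadj with h | h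
    · subst h
      exact (mem_closedNbhd _).mpr (Or.inr (adj_YT (l, true)).symm)
    · subst h
      refine (mem_closedNbhd _).mpr (Or.inl ?_)
      simp [vT]

lemma key (S : Finset (CWVert n m f t)) :
    CWP S → VDOn (cwGraph n m f t R) S := by
  induction S using Finset.strongInduction with
  | _ S IH =>
    intro hP
    by_cases hE : ∀ u ∈ S, ∀ v ∈ S, ¬ (cwGraph n m f t R).Adj u v
    · rw [VDOn]; exact Or.inl hE
    · rw [VDOn]
      refine Or.inr ?_
      push_neg at hE
      obtain ⟨u, hu, v, hv, huv⟩ := hE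
      rw [cwGraph, SimpleGraph.fromRel_adj] at huv
      obtain ⟨hne, h | h⟩ := huv
      · exact handle IH hP hu hv h
      · exact handle IH hP hv hu h

end CW

/-- Every Cameron--Walker graph is vertex decomposable (hence its independence complex is
shellable and sequentially Cohen--Macaulay). -/
theorem stmt15 (n m : ℕ) (f : Fin n → ℕ) (t : Fin m → ℕ) (R : Fin n → Fin m → Prop)
    (hf : ∀ i, 1 ≤ f i) (hconn : (cwGraph n m f t R).Connected) :
    VDOn (cwGraph n m f t R) Finset.univ := by
  exact key Finset.univ (fun i _ => ⟨⟨0, hf i⟩, Finset.mem_univ _⟩)
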